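/- The standard Cauchy distribution satisfies the dilation property with parameter γ=2: for all λ with |λ| ≤ ε/6 and all measurable S ⊆ ℝ, Pr_{Z∼Cauchy}[Z ∈ S] ≤ e^{ε/2}·Pr_{Z∼Cauchy}[Z ∈ e^λ·S], where e^λ·S = {e^λ z : z ∈ S}. -/

import Mathlib

open MeasureTheory

noncomputable def cauchyMeasure : Measure ℝ :=
  volume.withDensity fun z => ENNReal.ofReal (1 / (Real.pi * (1 + z ^ 2)))

lemma key_ineq (ε lam x : ℝ) (hε : 0 < ε) (hlam : |lam| ≤ ε / 6) :
    1 / (Real.pi * (1 + x ^ 2)) ≤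
      Real.exp (ε / 2) * (Real.exp lam * (1 / (Real.pi * (1 + (Real.exp lam * x) ^ 2)))) := by
  have hpi := Real.pi_pos
  have h1 : (0:ℝ) < 1 + x ^ 2 := by positivity
  have h2 : (0:ℝ) < 1 + (Real.exp lam * x) ^ 2 := by positivity
  rw [show Real.exp (ε / 2) * (Real.exp lam * (1 / (Real.pi * (1 + (Real.exp lam * x) ^ 2))))
      = Real.exp (ε / 2 + lam) / (Real.pi * (1 + (Real.exp lam * x) ^ 2)) by
    rw [Real.exp_add]; ring]
  rw [div_le_div_iff₀ (by positivity) (by positivity)]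
  have hE : Real.exp (2 * |lam|) ≤ Real.exp (ε / 2 + lam) := by
    apply Real.exp_le_exp.2
    have := abs_le.1 hlam
    have := neg_abs_le lam
    linarith [abs_nonneg lam]
  have h3 : (Real.exp lam * x) ^ 2 ≤ Real.exp (2 * |lam|) * x ^ 2 := by
    rw [mul_pow, sq (Real.exp lam), ← Real.exp_add]
    exact mul_le_mul_of_nonneg_right
      (Real.exp_le_exp.2 (by linarith [le_abs_self lam])) (sq_nonneg x)
  have h4 : (1:ℝ) ≤ Real.exp (2 * |lam|) := Real.one_le_exp (by positivity)
  have h5 : 1 + (Real.exp lam * x) ^ 2 ≤ Real.exp (ε / 2 + lam) * (1 + x ^ 2) := by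
    nlinarith [sq_nonneg x]
  nlinarith [mul_le_mul_of_nonneg_left h5 hpi.le]

theorem cauchy_dilation (ε : ℝ) (hε : 0 < ε) (lam : ℝ) (hlam : |lam| ≤ ε / 6)
    (S : Set ℝ) (hS : MeasurableSet S) :
    cauchyMeasure S ≤
      ENNReal.ofReal (Real.exp (ε / 2)) * cauchyMeasure ((fun z => Real.exp lam * z) '' S) := by
  set e := Real.exp lam with he
  have he0 : 0 < e := Real.exp_pos lam
  have hinj : Function.Injective (fun z : ℝ => e * z) :=
    fun a b h => by simpa [he0.ne'] using h
  have hT : MeasurableSet ((fun z => e * z) '' S) := by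
    have : (fun z : ℝ => e * z) '' S = (fun z : ℝ => e⁻¹ * z) ⁻¹' S := by
      ext z
      simp only [Set.mem_image, Set.mem_preimage]
      constructor
      · rintro ⟨x, hx, rfl⟩; simpa [inv_mul_cancel_left₀ he0.ne'] using hx
      · intro h; exact ⟨e⁻¹ * z, h, by field_simp⟩
    rw [this]
    exact hS.preimage (measurable_const_mul _)
  have hfmeas : Measurable fun z : ℝ => ENNReal.ofReal (1 / (Real.pi * (1 + z ^ 2))) := by
    apply Measurable.ennreal_ofReal
    fun_prop
  -- compute measure of image
  have himg : cauchyMeasure ((fun z => e * z) '' S)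
      = ENNReal.ofReal e * ∫⁻ x in S, ENNReal.ofReal (1 / (Real.pi * (1 + (e * x) ^ 2))) := by
    rw [cauchyMeasure, withDensity_apply _ hT]
    conv_lhs => rw [← Real.smul_map_volume_mul_left he0.ne']
    rw [Measure.restrict_smul, lintegral_smul_measure,
      Measure.restrict_map (measurable_const_mul e) hT,
      lintegral_map hfmeas (measurable_const_mul e),
      Set.preimage_image_eq _ hinj, abs_of_pos he0, smul_eq_mul]
  rw [himg, cauchyMeasure, withDensity_apply _ hS]
  rw [← mul_assoc, ← lintegral_const_mul' _ _ (ENNReal.mul_ne_top ENNReal.ofReal_ne_top ENNReal.ofReal_ne_top), ← ENNReal.ofReal_mul (by positivity)]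
  apply setLIntegral_mono (by fun_prop) -- might need measurability of integrand
  intro x _
  rw [← ENNReal.ofReal_mul (by positivity)]
  apply ENNReal.ofReal_le_ofReal
  have := key_ineq ε lam x hε hlam
  rw [← he] at this
  linarith [this]
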